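/- For any finite simple graph G with an orientation σ, the skew-rank of G^σ satisfies sr(G^σ) ≥ r(G) − 2d(G), where r(G) is the rank of the adjacency matrix of G and d(G) = |E(G)| − |V(G)| + θ(G) is the dimension of the cycle space of G (θ(G) the number of connected components). -/

import Mathlib

open scoped Classical

/-- `S` is a skew-adjacency matrix of some orientation of the simple graph `G`:
entries on arcs are `±1` (with `S j i = - S i j`), and `0` off edges. -/
def IsSkewAdjMatrix {V : Type*} (G : SimpleGraph V) (S : Matrix V V ℝ) : Prop :=
  (∀ i j, G.Adj i j → S i j = 1 ∨ S i j = -1) ∧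
  (∀ i j, ¬ G.Adj i j → S i j = 0) ∧
  (∀ i j, S j i = - S i j)

/-- The real adjacency matrix of a simple graph. -/
noncomputable def adjMat {V : Type*} (G : SimpleGraph V) : Matrix V V ℝ :=
  Matrix.of fun i j => if G.Adj i j then 1 else 0

/-- The dimension of the cycle space: `|E(G)| - |V(G)| + θ(G)`. -/
noncomputable def cycDim {V : Type*} (G : SimpleGraph V) : ℤ :=
  (G.edgeSet.ncard : ℤ) - Nat.card V + Nat.card G.ConnectedComponent

set_option linter.unusedSectionVars false
set_option maxHeartbeats 1000000

namespace SkewAux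

variable {V : Type*} [Fintype V]

noncomputable def root (G : SimpleGraph V) (v : V) : V := (G.connectedComponentMk v).out

lemma root_reachable (G : SimpleGraph V) (v : V) : G.Reachable (root G v) v := by
  have h : G.connectedComponentMk (root G v) = G.connectedComponentMk v :=
    (G.connectedComponentMk v).out_eq
  exact SimpleGraph.ConnectedComponent.eq.mp h

lemma root_eq_of_adj {G : SimpleGraph V} {u v : V} (h : G.Adj u v) : root G u = root G v := by
  unfold root
  rw [SimpleGraph.ConnectedComponent.sound h.reachable]

lemma exists_parent (G : SimpleGraph V) (v : V) (h : G.dist (root G v) v ≠ 0) :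
    ∃ u, G.Adj u v ∧ G.dist (root G v) u + 1 = G.dist (root G v) v := by
  obtain ⟨p, hp⟩ := SimpleGraph.exists_walk_of_dist_ne_zero h
  have hvr : v ≠ root G v := by
    intro e
    rw [← e] at h
    exact h SimpleGraph.dist_self
  obtain ⟨w, hadj, q, hq⟩ := SimpleGraph.Walk.exists_eq_cons_of_ne hvr p.reverse
  refine ⟨w, hadj.symm, ?_⟩
  have hlen : q.length + 1 = G.dist (root G v) v := by
    have := congrArg SimpleGraph.Walk.length hq
    simp only [SimpleGraph.Walk.length_reverse, SimpleGraph.Walk.length_cons] at this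
    omega
  have h1 : G.dist (root G v) w ≤ q.length := by
    have := SimpleGraph.dist_le q.reverse
    simpa [SimpleGraph.Walk.length_reverse] using this
  have hrw : G.Reachable (root G v) w := (root_reachable G v).trans hadj.reachable
  have h2 : G.dist (root G v) v ≤ G.dist (root G v) w + 1 := by
    obtain ⟨p', hp'⟩ := hrw.exists_walk_length_eq_dist
    have := SimpleGraph.dist_le (p'.concat hadj.symm)
    simpa [SimpleGraph.Walk.length_concat, hp'] using this
  omega

noncomputable def parent (G : SimpleGraph V) (v : V) : V :=
  if h : G.dist (root G v) v ≠ 0 then (exists_parent G v h).choose else v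

lemma parent_spec {G : SimpleGraph V} {v : V} (h : G.dist (root G v) v ≠ 0) :
    G.Adj (parent G v) v ∧ G.dist (root G v) (parent G v) + 1 = G.dist (root G v) v := by
  rw [parent, dif_pos h]
  exact (exists_parent G v h).choose_spec

lemma parent_dist_lt {G : SimpleGraph V} {v : V} (h : ¬ G.dist (root G v) v = 0) :
    G.dist (root G (parent G v)) (parent G v) < G.dist (root G v) v := by
  obtain ⟨hadj, hd⟩ := parent_spec h
  rw [root_eq_of_adj hadj]
  omega

noncomputable def sgn (G : SimpleGraph V) (S : Matrix V V ℝ) (v : V) : ℝ × ℝ :=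
  if h : G.dist (root G v) v = 0 then (1, 1)
  else (-(S (parent G v) v) * (sgn G S (parent G v)).2,
        S (parent G v) v * (sgn G S (parent G v)).1)
termination_by G.dist (root G v) v
decreasing_by exact parent_dist_lt h

lemma sgn_of_root {G : SimpleGraph V} {S : Matrix V V ℝ} {v : V}
    (h : G.dist (root G v) v = 0) : sgn G S v = (1, 1) := by
  rw [sgn, dif_pos h]

lemma sgn_of_nonroot {G : SimpleGraph V} {S : Matrix V V ℝ} {v : V}
    (h : ¬ G.dist (root G v) v = 0) :
    sgn G S v = (-(S (parent G v) v) * (sgn G S (parent G v)).2,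
        S (parent G v) v * (sgn G S (parent G v)).1) := by
  rw [sgn, dif_neg h]

lemma sgn_sq {G : SimpleGraph V} {S : Matrix V V ℝ} (hS : IsSkewAdjMatrix G S) (v : V) :
    (sgn G S v).1 * (sgn G S v).1 = 1 ∧ (sgn G S v).2 * (sgn G S v).2 = 1 := by
  suffices H : ∀ (n : ℕ) (v : V), G.dist (root G v) v = n →
      (sgn G S v).1 * (sgn G S v).1 = 1 ∧ (sgn G S v).2 * (sgn G S v).2 = 1 from H _ v rfl
  intro n
  induction n using Nat.strong_induction_on with
  | _ n IH =>
    intro v hv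
    by_cases h : G.dist (root G v) v = 0
    · rw [sgn_of_root h]; norm_num
    · have hadj := (parent_spec h).1
      have hs2 : S (parent G v) v * S (parent G v) v = 1 := by
        rcases hS.1 _ _ hadj with hs | hs <;> rw [hs] <;> norm_num
      have hp := IH _ (hv ▸ parent_dist_lt h) (parent G v) rfl
      rw [sgn_of_nonroot h]
      refine ⟨?_, ?_⟩ <;> simp only [Prod.fst, Prod.snd] <;> nlinarith [hp.1, hp.2, hs2]

/-! ### Rank lemmas -/

lemma rank_add_le (A B : Matrix V V ℝ) : (A + B).rank ≤ A.rank + B.rank := by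
  unfold Matrix.rank
  have hr : LinearMap.range (A + B).mulVecLin ≤
      LinearMap.range A.mulVecLin ⊔ LinearMap.range B.mulVecLin := by
    rintro x ⟨y, rfl⟩
    rw [Matrix.mulVecLin_add]
    exact Submodule.add_mem_sup ⟨y, rfl⟩ ⟨y, rfl⟩
  refine (Submodule.finrank_mono hr).trans ?_
  exact Submodule.finrank_add_le_finrank_add_finrank _ _

lemma rank_sum_le {α : Type*} (s : Finset α) (f : α → Matrix V V ℝ) :
    (∑ a ∈ s, f a).rank ≤ ∑ a ∈ s, (f a).rank := by
  induction s using Finset.induction_on with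
  | empty => simp [Matrix.rank_zero]
  | insert _ _ h ih =>
    rw [Finset.sum_insert h, Finset.sum_insert h]
    exact (rank_add_le _ _).trans (by gcongr)

lemma rank_stdBasisMatrix_le [DecidableEq V] (i j : V) (c : ℝ) :
    (Matrix.single i j c).rank ≤ 1 := by
  have h : Matrix.single i j c = Matrix.vecMulVec (Pi.single i (1:ℝ)) (Pi.single j c) := by
    ext a b
    simp [Matrix.vecMulVec_apply, Pi.single_apply, Matrix.single]
    aesop
  rw [h, Matrix.rank]
  have hr : LinearMap.range (Matrix.vecMulVec (Pi.single i (1:ℝ)) (Pi.single j c)).mulVecLin ≤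
      Submodule.span ℝ {Pi.single i (1:ℝ)} := by
    rintro x ⟨y, rfl⟩
    have hy : (Matrix.vecMulVec (Pi.single i (1:ℝ)) (Pi.single j c)).mulVecLin y
        = (dotProduct (Pi.single j c) y) • (Pi.single i (1:ℝ) : V → ℝ) := by
      ext a
      simp [Matrix.mulVecLin_apply, Matrix.mulVec, Matrix.vecMulVec_apply, dotProduct,
        Finset.mul_sum, mul_comm, mul_assoc, mul_left_comm]
    rw [hy]
    exact Submodule.smul_mem _ _ (Submodule.mem_span_singleton_self _)
  refine (Submodule.finrank_mono hr).trans ?_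
  refine (finrank_span_le_card _).trans ?_
  simp

lemma rank_le_card_support [DecidableEq V] (T : Matrix V V ℝ) :
    T.rank ≤ (Finset.univ.filter fun p : V × V => T p.1 p.2 ≠ 0).card := by
  set s := Finset.univ.filter fun p : V × V => T p.1 p.2 ≠ 0 with hs
  have hT : T = ∑ p ∈ s, Matrix.single p.1 p.2 (T p.1 p.2) := by
    ext a b
    rw [Matrix.sum_apply]
    by_cases hab : T a b = 0
    · rw [hab]
      symm
      refine Finset.sum_eq_zero fun p hp => ?_
      by_cases hpe : p.1 = a ∧ p.2 = b
      · obtain ⟨h1, h2⟩ := hpe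
        simp [Matrix.single, h1, h2, hab]
      · simp only [Matrix.single, Matrix.of_apply, ite_eq_right_iff]
        intro hc
        exact absurd hc hpe
    · symm
      rw [Finset.sum_eq_single (a, b)]
      · simp [Matrix.single]
      · intro p hp hne
        simp only [Matrix.single, Matrix.of_apply, ite_eq_right_iff]
        intro hc
        exact absurd (Prod.ext hc.1 hc.2) hne
      · intro habs
        exact absurd (by simp [hs, hab]) habs
  calc T.rank = (∑ p ∈ s, Matrix.single p.1 p.2 (T p.1 p.2)).rank := by rw [← hT]
    _ ≤ ∑ p ∈ s, (Matrix.single p.1 p.2 (T p.1 p.2)).rank := rank_sum_le _ _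
    _ ≤ ∑ p ∈ s, 1 := Finset.sum_le_sum fun p _ => rank_stdBasisMatrix_le _ _ _
    _ = s.card := by simp

/-! ### Counting -/

noncomputable def roots (G : SimpleGraph V) : Finset V :=
  Finset.univ.filter fun v => G.dist (root G v) v = 0

noncomputable def parentEdges (G : SimpleGraph V) : Finset (Sym2 V) :=
  (Finset.univ.filter fun v => ¬ G.dist (root G v) v = 0).image fun v => s(parent G v, v)

lemma dist_root_eq_zero_iff {G : SimpleGraph V} {v : V} :
    G.dist (root G v) v = 0 ↔ root G v = v :=
  (root_reachable G v).dist_eq_zero_iff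

lemma root_out {G : SimpleGraph V} (c : G.ConnectedComponent) : root G c.out = c.out := by
  exact congrArg Quot.out c.out_eq

lemma card_roots (G : SimpleGraph V) : (roots G).card = Nat.card G.ConnectedComponent := by
  rw [Nat.card_eq_fintype_card, ← Finset.card_univ]
  refine Finset.card_nbij' (fun v => G.connectedComponentMk v) (fun c => c.out)
    (fun v hv => Finset.mem_univ _) (fun c hc => ?_) (fun v hv => ?_) (fun c hc => ?_)
  · simp only [roots, Finset.mem_coe, Finset.mem_filter, Finset.mem_univ, true_and]
    rw [dist_root_eq_zero_iff]
    exact root_out c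
  · simp only [roots, Finset.mem_coe, Finset.mem_filter, Finset.mem_univ, true_and] at hv
    rw [dist_root_eq_zero_iff] at hv
    exact hv
  · exact c.out_eq

lemma card_parentEdges (G : SimpleGraph V) :
    (parentEdges G).card + (roots G).card = Fintype.card V := by
  rw [parentEdges, Finset.card_image_of_injOn]
  · rw [roots, ← Finset.card_univ]
    have := Finset.card_filter_add_card_filter_not
      (s := (Finset.univ : Finset V)) (p := fun v => G.dist (root G v) v = 0)
    omega
  · intro v hv w hw he
    simp only [Finset.coe_filter, Set.mem_setOf_eq, Finset.mem_univ, true_and] at hv hw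
    rcases Sym2.eq_iff.mp he with ⟨h1, h2⟩ | ⟨h1, h2⟩
    · exact h2
    · exfalso
      have hadjv := (parent_spec hv).1
      have hdv := (parent_spec hv).2
      have hdw := (parent_spec hw).2
      have hroot : root G v = root G w := by
        rw [← root_eq_of_adj hadjv, h1]
      rw [h1] at hdv
      rw [← h2, ← hroot] at hdw
      omega

lemma parentEdges_subset (G : SimpleGraph V) : parentEdges G ⊆ G.edgeFinset := by
  intro e he
  simp only [parentEdges, Finset.mem_image, Finset.mem_filter, Finset.mem_univ, true_and] at he
  obtain ⟨v, hv, rfl⟩ := he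
  rw [SimpleGraph.mem_edgeFinset, SimpleGraph.mem_edgeSet]
  exact (parent_spec hv).1

end SkewAux

open SkewAux

/-- For any orientation of a finite simple graph `G`,
`sr(G^σ) ≥ r(G) - 2 d(G)`. -/
theorem skewRank_ge_rank_sub_two_mul_cycDim {V : Type*} [Fintype V]
    (G : SimpleGraph V) (S : Matrix V V ℝ) (hS : IsSkewAdjMatrix G S) :
    ((adjMat G).rank : ℤ) - 2 * cycDim G ≤ (S.rank : ℤ) := by
  classical
  set dd := fun v => (sgn G S v).1 with hdd
  set ee := fun v => (sgn G S v).2 with hee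
  have hd1 : ∀ v, dd v * dd v = 1 := fun v => (sgn_sq hS v).1
  have he1 : ∀ v, ee v * ee v = 1 := fun v => (sgn_sq hS v).2
  have hd0 : ∀ v, dd v ≠ 0 := fun v h => by simpa [h] using hd1 v
  have he0 : ∀ v, ee v ≠ 0 := fun v h => by simpa [h] using he1 v
  set M := Matrix.diagonal dd * S * Matrix.diagonal ee with hM
  have hdetd : IsUnit (Matrix.diagonal dd).det := by
    rw [Matrix.det_diagonal]
    exact isUnit_iff_ne_zero.mpr (Finset.prod_ne_zero_iff.mpr fun v _ => hd0 v)
  have hdete : IsUnit (Matrix.diagonal ee).det := by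
    rw [Matrix.det_diagonal]
    exact isUnit_iff_ne_zero.mpr (Finset.prod_ne_zero_iff.mpr fun v _ => he0 v)
  have hMrank : M.rank = S.rank := by
    rw [hM, Matrix.rank_mul_eq_left_of_isUnit_det _ _ hdete,
      Matrix.rank_mul_eq_right_of_isUnit_det _ _ hdetd]
  have hMapp : ∀ u v, M u v = dd u * (S u v * ee v) := by
    intro u v
    rw [hM, Matrix.mul_diagonal, Matrix.diagonal_mul, mul_assoc]
  set T := adjMat G - M with hT
  have hTapp : ∀ u v, T u v = adjMat G u v - dd u * (S u v * ee v) := by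
    intro u v
    rw [hT, Matrix.sub_apply, hMapp]
  -- support of T
  have hsupp : ∀ u v : V, T u v ≠ 0 → s(u, v) ∈ G.edgeFinset \ parentEdges G := by
    intro u v htuv
    have hadj : G.Adj u v := by
      by_contra hne
      apply htuv
      rw [hTapp, hS.2.1 u v hne]
      simp [adjMat, hne]
    rw [Finset.mem_sdiff]
    refine ⟨by rwa [SimpleGraph.mem_edgeFinset, SimpleGraph.mem_edgeSet], ?_⟩
    intro hmem
    apply htuv
    simp only [parentEdges, Finset.mem_image, Finset.mem_filter, Finset.mem_univ,
      true_and] at hmem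
    obtain ⟨w, hw, hewq⟩ := hmem
    have hpadj := (parent_spec hw).1
    have hsw : S (parent G w) w * S (parent G w) w = 1 := by
      rcases hS.1 _ _ hpadj with hs | hs <;> rw [hs] <;> norm_num
    have hsgnw := sgn_of_nonroot (S := S) hw
    have hddw : dd w = -(S (parent G w) w) * ee (parent G w) := by
      simp only [hdd]
      rw [hsgnw]
    have heew : ee w = S (parent G w) w * dd (parent G w) := by
      simp only [hee]
      rw [hsgnw]
    rcases Sym2.eq_iff.mp hewq with ⟨h1, h2⟩ | ⟨h1, h2⟩
    · -- parent w = u, w = v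
      subst h1; subst h2
      rw [hTapp, heew]
      have hA1 : adjMat G (parent G w) w = (1:ℝ) := by simp [adjMat, hpadj]
      rw [hA1]
      nlinarith [hd1 (parent G w), hsw]
    · -- parent w = v, w = u
      subst h1; subst h2
      rw [hTapp, hddw]
      have hA1 : adjMat G w (parent G w) = (1:ℝ) := by simp [adjMat, hpadj.symm]
      rw [hA1]
      have hanti : S w (parent G w) = - S (parent G w) w := hS.2.2 (parent G w) w
      rw [hanti]
      nlinarith [he1 (parent G w), hsw]
  set supp := Finset.univ.filter (fun p : V × V => T p.1 p.2 ≠ 0) with hsuppdef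
  have hfib : ∀ e ∈ G.edgeFinset \ parentEdges G,
      (supp.filter fun p : V × V => s(p.1, p.2) = e).card ≤ 2 := by
    intro e _
    induction e using Sym2.ind with
    | _ a b =>
      refine (Finset.card_le_card (t := {(a, b), (b, a)}) ?_).trans ?_
      · intro p hp
        simp only [Finset.mem_filter] at hp
        rcases Sym2.eq_iff.mp hp.2 with ⟨h1, h2⟩ | ⟨h1, h2⟩
        · simp [Finset.mem_insert, ← h1, ← h2]
        · simp [Finset.mem_insert, ← h1, ← h2]
      · exact (Finset.card_insert_le _ _).trans (by simp)
  have hcard : supp.card ≤ 2 * (G.edgeFinset \ parentEdges G).card := by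
    rw [Finset.card_eq_sum_card_fiberwise (f := fun p : V × V => s(p.1, p.2))
      (t := G.edgeFinset \ parentEdges G)
      (fun p hp => hsupp p.1 p.2 (by simpa [hsuppdef] using hp))]
    calc ∑ e ∈ G.edgeFinset \ parentEdges G, (supp.filter fun p : V × V => s(p.1, p.2) = e).card
        ≤ ∑ _e ∈ G.edgeFinset \ parentEdges G, 2 := Finset.sum_le_sum hfib
      _ = 2 * (G.edgeFinset \ parentEdges G).card := by
          rw [Finset.sum_const, smul_eq_mul, mul_comm]
  have hAr : (adjMat G).rank ≤ S.rank + T.rank := by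
    have hAMT : adjMat G = M + T := by rw [hT]; abel
    calc (adjMat G).rank = (M + T).rank := by rw [← hAMT]
      _ ≤ M.rank + T.rank := rank_add_le _ _
      _ = S.rank + T.rank := by rw [hMrank]
  have hTr : T.rank ≤ supp.card := rank_le_card_support T
  have hsub : parentEdges G ⊆ G.edgeFinset := parentEdges_subset G
  have hEc : (G.edgeFinset \ parentEdges G).card
      = G.edgeFinset.card - (parentEdges G).card := Finset.card_sdiff_of_subset hsub
  have hple : (parentEdges G).card ≤ G.edgeFinset.card := Finset.card_le_card hsub
  have hpe := card_parentEdges G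
  have hroots := card_roots G
  have hncard : G.edgeSet.ncard = G.edgeFinset.card := by
    rw [Set.ncard_eq_toFinset_card']
    congr 1
  have hNV : (Nat.card V) = Fintype.card V := Nat.card_eq_fintype_card
  unfold cycDim
  rw [hncard, hNV, ← hroots]
  omega
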